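/- arXiv:2401.12463 — 6 statements merged into one kernel-verified Lean document; each statement's English description precedes it below -/
import Mathlib

section
/- Let A ∈ ℤ^{m×n}, b ∈ ℤ^m, Q_I = AᵀA, L ∈ ℤⁿ a lower-bound vector, and E ∈ ℤ^{n×p} an encoding matrix. Define Q_B = EᵀQ_I E + 2·diag((LᵀQ_I − bᵀA)E), where diag(v) is the diagonal matrix with diagonal v. Then for every binary vector X ∈ {0,1}^p, writing x = L + EX, one has XᵀQ_B X = xᵀQ_I x − 2bᵀAx − (LᵀQ_I L − 2bᵀAL). In particular, minimizing XᵀQ_B X over X ∈ {0,1}^p is equivalent (up to the additive constant LᵀQ_I L − 2bᵀAL) to minimizing the QUIO objective xᵀQ_I x − 2bᵀAx over x ∈ L + E·{0,1}^p. -/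
open Matrix

private lemma diag_quad (p : ℕ) (v X : Fin p → ℤ) (h : ∀ i, X i * X i = X i) :
    dotProduct X ((diagonal v).mulVec X) = dotProduct v X := by
  simp only [dotProduct, mulVec_diagonal]
  exact Finset.sum_congr rfl fun i _ => by rw [mul_left_comm, h]

private lemma transp_dot {m n : ℕ} (M : Matrix (Fin m) (Fin n) ℤ) (x : Fin n → ℤ)
    (y : Fin m → ℤ) : dotProduct x (Mᵀ.mulVec y) = dotProduct (M.mulVec x) y := by
  rw [dotProduct_mulVec, vecMul_transpose]

private lemma vecMul_dot {m n : ℕ} (M : Matrix (Fin m) (Fin n) ℤ) (x : Fin m → ℤ)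
    (y : Fin n → ℤ) : dotProduct (vecMul x M) y = dotProduct x (M.mulVec y) := by
  rw [dotProduct_mulVec]

/-- **Binary encoding of the QUIO as a QUBO.**
With `Q_I = AᵀA`, `x = L + EX` and
`Q_B = EᵀQ_I E + 2·diag((LᵀQ_I − bᵀA)E)`, for every binary `X ∈ {0,1}^p` one has
`XᵀQ_B X = xᵀQ_I x − 2bᵀAx − (LᵀQ_I L − 2bᵀAL)`; in particular minimizing the QUBO
over binary vectors is equivalent, up to this additive constant, to minimizing the
QUIO objective over `x ∈ L + E·{0,1}^p`. -/
theorem stmt_1 (m n p : ℕ) (A : Matrix (Fin m) (Fin n) ℤ) (b : Fin m → ℤ)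
    (L : Fin n → ℤ) (E : Matrix (Fin n) (Fin p) ℤ)
    (QI : Matrix (Fin n) (Fin n) ℤ) (hQI : QI = Aᵀ * A)
    (QB : Matrix (Fin p) (Fin p) ℤ)
    (hQB : QB = Eᵀ * QI * E +
      (2 : ℤ) • Matrix.diagonal (Matrix.vecMul (Matrix.vecMul L QI - Matrix.vecMul b A) E)) :
    (∀ X : Fin p → ℤ, (∀ i, X i = 0 ∨ X i = 1) →
      dotProduct X (QB.mulVec X) =
        dotProduct (L + E.mulVec X) (QI.mulVec (L + E.mulVec X))
          - 2 * dotProduct b (A.mulVec (L + E.mulVec X))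
          - (dotProduct L (QI.mulVec L) - 2 * dotProduct b (A.mulVec L))) ∧
    (∀ X Y : Fin p → ℤ, (∀ i, X i = 0 ∨ X i = 1) → (∀ i, Y i = 0 ∨ Y i = 1) →
      (dotProduct X (QB.mulVec X) ≤ dotProduct Y (QB.mulVec Y) ↔
        dotProduct (L + E.mulVec X) (QI.mulVec (L + E.mulVec X))
          - 2 * dotProduct b (A.mulVec (L + E.mulVec X)) ≤
        dotProduct (L + E.mulVec Y) (QI.mulVec (L + E.mulVec Y))
          - 2 * dotProduct b (A.mulVec (L + E.mulVec Y)))) := by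
  subst hQI hQB
  have key : ∀ X : Fin p → ℤ, (∀ i, X i = 0 ∨ X i = 1) →
      dotProduct X (((Eᵀ * (Aᵀ * A) * E) +
        (2 : ℤ) • Matrix.diagonal (Matrix.vecMul (Matrix.vecMul L (Aᵀ * A) - Matrix.vecMul b A) E)).mulVec X) =
        dotProduct (L + E.mulVec X) ((Aᵀ * A).mulVec (L + E.mulVec X))
          - 2 * dotProduct b (A.mulVec (L + E.mulVec X))
          - (dotProduct L ((Aᵀ * A).mulVec L) - 2 * dotProduct b (A.mulVec L)) := by
    intro X hX
    have hsq : ∀ i, X i * X i = X i := fun i => by rcases hX i with h | h <;> simp [h]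
    rw [add_mulVec, dotProduct_add, smul_mulVec, dotProduct_smul, smul_eq_mul,
      diag_quad _ _ _ hsq, vecMul_dot, sub_dotProduct, vecMul_dot, vecMul_dot]
    simp only [← mulVec_mulVec, transp_dot, mulVec_add, dotProduct_add, add_dotProduct]
    rw [dotProduct_comm (A.mulVec (E.mulVec X)) (A.mulVec L)]
    ring
  refine ⟨key, fun X Y hX hY => ?_⟩
  rw [key X hX, key Y hY, sub_le_sub_iff_right]
end

section
/- For every integer matrix A ∈ ℤ^{m×n}, the Graver basis G(A), i.e., the set of ⊑-minimal elements of L*(A), is a finite set. -/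
/-- `x` is conformal to `y` (written `x ⊑ y`): componentwise, `x i * y i ≥ 0`
(same orthant) and `|x i| ≤ |y i|`. -/
def ConformalTo {n : ℕ} (x y : Fin n → ℤ) : Prop :=
  ∀ i, 0 ≤ x i * y i ∧ |x i| ≤ |y i|

/-- `L*(A) = {x ∈ ℤⁿ : Ax = 0, x ≠ 0}`. -/
def kernelLattice {m n : ℕ} (A : Matrix (Fin m) (Fin n) ℤ) : Set (Fin n → ℤ) :=
  {x | A.mulVec x = 0 ∧ x ≠ 0}

/-- The Graver basis `G(A)`: the set of `⊑`-minimal elements of `L*(A)`. -/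
def graverBasis {m n : ℕ} (A : Matrix (Fin m) (Fin n) ℤ) : Set (Fin n → ℤ) :=
  {g | g ∈ kernelLattice A ∧ ∀ h ∈ kernelLattice A, h ≠ g → ¬ ConformalTo h g}

lemma key_conf (a b : ℤ) (h1 : a.toNat ≤ b.toNat) (h2 : (-a).toNat ≤ (-b).toNat) :
    0 ≤ a * b ∧ |a| ≤ |b| := by
  constructor
  · rcases lt_trichotomy a 0 with ha | ha | ha
    · have hb : b ≤ 0 := by omega
      have := mul_nonneg (by omega : (0:ℤ) ≤ -a) (by omega : (0:ℤ) ≤ -b)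
      nlinarith
    · simp [ha]
    · exact mul_nonneg ha.le (by omega)
  · rw [Int.abs_eq_natAbs, Int.abs_eq_natAbs]
    omega

/-- **Finiteness of the Graver basis.** For every integer matrix `A ∈ ℤ^{m×n}`,
the Graver basis `G(A)` is a finite set. -/
theorem stmt_2 (m n : ℕ) (A : Matrix (Fin m) (Fin n) ℤ) :
    (graverBasis A).Finite := by
  classical
  set f : (Fin n → ℤ) → (Fin n × Bool → ℕ) :=
    fun x p => if p.2 then (x p.1).toNat else (-(x p.1)).toNat with hf
  have hinj : Function.Injective f := by
    intro x y hxy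
    funext i
    have h1 := congrFun hxy (i, true)
    have h2 := congrFun hxy (i, false)
    simp only [hf, if_true, Bool.false_eq_true, if_false] at h1 h2
    omega
  have hanti : IsAntichain (· ≤ ·) (f '' graverBasis A) := by
    rintro _ ⟨g, hg, rfl⟩ _ ⟨h, hh, rfl⟩ hne hle
    have hgh : g ≠ h := fun e => hne (by rw [e])
    refine hh.2 g hg.1 hgh fun i => ?_
    have h1 : f g (i, true) ≤ f h (i, true) := hle (i, true)
    have h2 : f g (i, false) ≤ f h (i, false) := hle (i, false)
    simp only [hf, if_true, Bool.false_eq_true, if_false] at h1 h2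
    exact key_conf _ _ h1 h2
  have hfin : (f '' graverBasis A).Finite :=
    hanti.finite_of_partiallyWellOrderedOn (Set.isPWO_of_wellQuasiOrderedLE _)
  exact (Set.Finite.of_finite_image hfin (hinj.injOn))
end

section
/- Every infinite subset S of ℤⁿ contains two distinct elements x and y with x ⊑ y; equivalently, the conformal order ⊑ admits no infinite antichain in ℤⁿ. -/
/-- **No infinite antichains for the conformal order.** Every infinite subset `S`
of `ℤⁿ` contains two distinct elements `x`, `y` with `x ⊑ y`. -/
theorem stmt_3 (n : ℕ) (S : Set (Fin n → ℤ)) (hS : S.Infinite) :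
    ∃ x ∈ S, ∃ y ∈ S, x ≠ y ∧ ConformalTo x y := by
  haveI : Infinite S := Set.infinite_coe_iff.mpr hS
  -- pigeonhole on sign patterns
  obtain ⟨b, hb⟩ := Finite.exists_infinite_fiber
    (fun x : S => (fun i => decide (0 ≤ (x : Fin n → ℤ) i) : Fin n → Bool))
  set T : Set (Fin n → ℤ) :=
    {x ∈ S | (fun i => decide (0 ≤ x i)) = b} with hT
  have hTinf : T.Infinite := by
    rw [← Set.infinite_coe_iff]
    exact Infinite.of_injective
      (fun p : ((fun x : S => (fun i => decide (0 ≤ (x : Fin n → ℤ) i) : Fin n → Bool)) ⁻¹' {b}) =>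
        (⟨(p.1 : Fin n → ℤ), p.1.2, p.2⟩ : T))
      (fun p q h => by
        simp only [Subtype.mk.injEq] at h
        exact Subtype.ext (Subtype.ext h))
  -- sequence in T
  let f : ℕ → Fin n → ℤ := fun k => (hTinf.natEmbedding T k : Fin n → ℤ)
  have hfT : ∀ k, f k ∈ T := fun k => (hTinf.natEmbedding T k).2
  have hfinj : Function.Injective f := fun a c h => by
    have := (hTinf.natEmbedding T).injective (Subtype.ext h)
    exact this
  -- Dickson's lemma
  haveI hwo : IsWellOrder ℕ (· < ·) := inferInstance
  have hpwo : Set.IsPWO (Set.univ : Set (Fin n → ℕ)) := Set.isPWO_of_wellQuasiOrderedLE _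
  obtain ⟨m, k, hmk, hle⟩ := hpwo.exists_lt (f := fun j i => (f j i).natAbs) (fun _ => Set.mem_univ _)
  refine ⟨f m, (hfT m).1, f k, (hfT k).1, fun h => absurd (hfinj h) hmk.ne, ?_⟩
  intro i
  have hsm : (fun i => decide (0 ≤ f m i)) = b := (hfT m).2
  have hsk : (fun i => decide (0 ≤ f k i)) = b := (hfT k).2
  have hsign : decide (0 ≤ f m i) = decide (0 ≤ f k i) := by
    rw [congrFun hsm i, congrFun hsk i]
  have habs : |f m i| ≤ |f k i| := by
    rw [Int.abs_eq_natAbs, Int.abs_eq_natAbs]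
    exact_mod_cast hle i
  refine ⟨?_, habs⟩
  by_cases h1 : 0 ≤ f m i
  · have h2 : 0 ≤ f k i := by
      have := hsign; simp [h1] at this; exact this
    exact mul_nonneg h1 h2
  · push_neg at h1
    have h2 : f k i < 0 := by
      have := hsign; simp [not_le.mpr h1] at this; omega
    exact le_of_lt (mul_pos_of_neg_of_neg h1 h2)
end

section
/- Let A ∈ ℤ^{m×n}, b ∈ ℤ^m, l, u ∈ ℤⁿ, and w ∈ ℝⁿ. The Graver basis G(A) is a test set (optimality certificate) for the integer linear program min{wᵀx : Ax = b, l ≤ x ≤ u, x ∈ ℤⁿ}: if x₀ is feasible (Ax₀ = b and l ≤ x₀ ≤ u) and there exists a feasible x with wᵀx < wᵀx₀, then there exist g ∈ G(A) and a positive integer λ such that x₀ + λg is feasible and wᵀ(x₀ + λg) < wᵀx₀. -/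
/-- Componentwise characterization of conformality via interval bounds. -/
lemma conf_comp_iff (a c : ℤ) :
    (0 ≤ a * c ∧ |a| ≤ |c|) ↔ ((0 ≤ a ∧ a ≤ c) ∨ (c ≤ a ∧ a ≤ 0)) := by
  constructor
  · rintro ⟨h1, h2⟩
    rcases le_or_gt 0 a with ha | ha <;> rcases le_or_gt 0 c with hc | hc
    · left
      rw [abs_of_nonneg ha, abs_of_nonneg hc] at h2
      exact ⟨ha, h2⟩
    · have : a = 0 := by nlinarith
      right; omega
    · exfalso
      have hc0 : c = 0 := le_antisymm (by nlinarith) hc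
      rw [hc0] at h2
      simp at h2
      omega
    · right
      rw [abs_of_neg ha, abs_of_neg hc] at h2
      constructor <;> omega
  · rintro (⟨h1, h2⟩ | ⟨h1, h2⟩)
    · refine ⟨mul_nonneg h1 (h1.trans h2), ?_⟩
      rw [abs_of_nonneg h1, abs_of_nonneg (h1.trans h2)]; exact h2
    · refine ⟨by nlinarith, ?_⟩
      rw [abs_of_nonpos h2, abs_of_nonpos (h1.trans h2)]; omega

lemma conformalTo_iff {n : ℕ} (x y : Fin n → ℤ) :
    ConformalTo x y ↔ ∀ i, (0 ≤ x i ∧ x i ≤ y i) ∨ (y i ≤ x i ∧ x i ≤ 0) := by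
  unfold ConformalTo
  exact forall_congr' fun i => conf_comp_iff _ _

lemma conformalTo_refl {n : ℕ} (x : Fin n → ℤ) : ConformalTo x x := by
  rw [conformalTo_iff]; intro i; omega

lemma conformalTo_trans {n : ℕ} {x y z : Fin n → ℤ}
    (h1 : ConformalTo x y) (h2 : ConformalTo y z) : ConformalTo x z := by
  rw [conformalTo_iff] at *
  intro i; have := h1 i; have := h2 i; omega

/-- Every element of `L*(A)` has a conformal Graver basis element. -/
lemma exists_graver_conformal {m n : ℕ} (A : Matrix (Fin m) (Fin n) ℤ) :
    ∀ N (z : Fin n → ℤ), (∑ i, (z i).natAbs) ≤ N → z ∈ kernelLattice A →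
      ∃ g ∈ graverBasis A, ConformalTo g z := by
  intro N
  induction N with
  | zero =>
    intro z hz hker
    exfalso
    apply hker.2
    funext i
    have h1 : (z i).natAbs ≤ ∑ j, (z j).natAbs :=
      Finset.single_le_sum (f := fun j => (z j).natAbs)
        (fun j _ => Nat.zero_le _) (Finset.mem_univ i)
    simp only [Pi.zero_apply]
    omega
  | succ N ih =>
    intro z hz hker
    by_cases hg : z ∈ graverBasis A
    · exact ⟨z, hg, conformalTo_refl z⟩
    · have : ∃ h ∈ kernelLattice A, h ≠ z ∧ ConformalTo h z := by
        unfold graverBasis at hg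
        simp only [Set.mem_setOf_eq, not_and, not_forall] at hg
        obtain ⟨h, hh1, hh2, hh3⟩ := hg hker
        exact ⟨h, hh1, hh2, not_not.mp hh3⟩
      obtain ⟨h, hhker, hne, hconf⟩ := this
      have hb := (conformalTo_iff h z).mp hconf
      have hlt : (∑ i, (h i).natAbs) < ∑ i, (z i).natAbs := by
        have hex : ∃ i, h i ≠ z i := by
          by_contra hc
          push_neg at hc
          exact hne (funext hc)
        obtain ⟨i₀, hi₀⟩ := hex
        apply Finset.sum_lt_sum (fun i _ => by have := hb i; omega)
          ⟨i₀, Finset.mem_univ i₀, by have := hb i₀; omega⟩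
      obtain ⟨g, hg1, hg2⟩ := ih h (by omega) hhker
      exact ⟨g, hg1, conformalTo_trans hg2 hconf⟩

/-- If `z ∈ L*(A)` has negative weight, some Graver element conformal to `z`
has negative weight. -/
lemma exists_graver_improving {m n : ℕ} (A : Matrix (Fin m) (Fin n) ℤ) (w : Fin n → ℝ) :
    ∀ N (z : Fin n → ℤ), (∑ i, (z i).natAbs) ≤ N → z ∈ kernelLattice A →
      (∑ i, w i * (z i : ℝ)) < 0 →
      ∃ g ∈ graverBasis A, ConformalTo g z ∧ (∑ i, w i * (g i : ℝ)) < 0 := by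
  intro N
  induction N with
  | zero =>
    intro z hz hker _
    exfalso
    apply hker.2
    funext i
    have h1 : (z i).natAbs ≤ ∑ j, (z j).natAbs :=
      Finset.single_le_sum (f := fun j => (z j).natAbs)
        (fun j _ => Nat.zero_le _) (Finset.mem_univ i)
    simp only [Pi.zero_apply]
    omega
  | succ N ih =>
    intro z hz hker hneg
    obtain ⟨g₀, hg₀, hconf₀⟩ := exists_graver_conformal A (N + 1) z hz hker
    rcases lt_or_ge (∑ i, w i * (g₀ i : ℝ)) 0 with hlt | hge
    · exact ⟨g₀, hg₀, hconf₀, hlt⟩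
    · set z' : Fin n → ℤ := z - g₀ with hz'def
      have hg₀ne : g₀ ≠ 0 := hg₀.1.2
      by_cases hz0 : z' = 0
      · exfalso
        have : z = g₀ := by
          funext i
          have := congrFun hz0 i
          simp [hz'def] at this
          omega
        rw [this] at hneg
        linarith
      · have hb := (conformalTo_iff g₀ z).mp hconf₀
        have hker' : z' ∈ kernelLattice A := by
          constructor
          · simp [hz'def, Matrix.mulVec_sub, hker.1, hg₀.1.1]
          · exact hz0
        have hconf' : ConformalTo z' z := by
          rw [conformalTo_iff]
          intro i
          have := hb i
          simp only [hz'def, Pi.sub_apply]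
          omega
        have hwz' : (∑ i, w i * (z' i : ℝ)) < 0 := by
          have : (∑ i, w i * (z' i : ℝ)) =
              (∑ i, w i * (z i : ℝ)) - (∑ i, w i * (g₀ i : ℝ)) := by
            rw [← Finset.sum_sub_distrib]
            apply Finset.sum_congr rfl
            intro i _
            simp [hz'def]
            ring
          rw [this]
          linarith
        have hlt : (∑ i, (z' i).natAbs) < ∑ i, (z i).natAbs := by
          have hex : ∃ i, g₀ i ≠ 0 := by
            by_contra hc
            push_neg at hc
            exact hg₀ne (funext hc)
          obtain ⟨i₀, hi₀⟩ := hex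
          apply Finset.sum_lt_sum
          · intro i _
            have := hb i
            simp only [hz'def, Pi.sub_apply]
            omega
          · refine ⟨i₀, Finset.mem_univ i₀, ?_⟩
            have := hb i₀
            simp only [hz'def, Pi.sub_apply]
            omega
        obtain ⟨g, hg1, hg2, hg3⟩ := ih z' (by omega) hker' hwz'
        exact ⟨g, hg1, conformalTo_trans hg2 hconf', hg3⟩

/-- **The Graver basis is a test set for integer linear programs.**
If `x₀` is feasible for `min {wᵀx : Ax = b, l ≤ x ≤ u, x ∈ ℤⁿ}` and some feasible `x`
has strictly smaller objective, then some `g ∈ G(A)` and positive integer `λ` give a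
feasible improving step `x₀ + λg`. -/
theorem stmt_4 (m n : ℕ) (A : Matrix (Fin m) (Fin n) ℤ) (b : Fin m → ℤ)
    (l u : Fin n → ℤ) (w : Fin n → ℝ) (x₀ : Fin n → ℤ)
    (hx₀ : A.mulVec x₀ = b ∧ ∀ i, l i ≤ x₀ i ∧ x₀ i ≤ u i)
    (x : Fin n → ℤ)
    (hx : A.mulVec x = b ∧ ∀ i, l i ≤ x i ∧ x i ≤ u i)
    (himp : ∑ i, w i * (x i : ℝ) < ∑ i, w i * (x₀ i : ℝ)) :
    ∃ g ∈ graverBasis A, ∃ lam : ℕ, 0 < lam ∧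
      A.mulVec (x₀ + (lam : ℤ) • g) = b ∧
      (∀ i, l i ≤ (x₀ + (lam : ℤ) • g) i ∧ (x₀ + (lam : ℤ) • g) i ≤ u i) ∧
      ∑ i, w i * (((x₀ + (lam : ℤ) • g) i : ℤ) : ℝ) < ∑ i, w i * (x₀ i : ℝ) := by
  set z : Fin n → ℤ := x - x₀ with hzdef
  have hzne : z ≠ 0 := by
    intro hc
    have : x = x₀ := by
      funext i
      have := congrFun hc i
      simp [hzdef] at this
      omega
    rw [this] at himp
    exact lt_irrefl _ himp
  have hker : z ∈ kernelLattice A := by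
    constructor
    · simp [hzdef, Matrix.mulVec_sub, hx.1, hx₀.1]
    · exact hzne
  have hsub : ∀ (v : Fin n → ℤ), (∑ i, w i * ((x i - v i : ℤ) : ℝ)) =
      (∑ i, w i * (x i : ℝ)) - (∑ i, w i * (v i : ℝ)) := by
    intro v
    rw [← Finset.sum_sub_distrib]
    apply Finset.sum_congr rfl
    intro i _
    push_cast
    ring
  have hwz : (∑ i, w i * (z i : ℝ)) < 0 := by
    have : (∑ i, w i * (z i : ℝ)) =
        (∑ i, w i * (x i : ℝ)) - (∑ i, w i * (x₀ i : ℝ)) := hsub x₀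
    rw [this]
    linarith
  obtain ⟨g, hg, hconf, hgneg⟩ :=
    exists_graver_improving A w (∑ i, (z i).natAbs) z le_rfl hker hwz
  have hb := (conformalTo_iff g z).mp hconf
  refine ⟨g, hg, 1, one_pos, ?_, ?_, ?_⟩
  · simp [Matrix.mulVec_add, Matrix.mulVec_smul, hg.1.1, hx₀.1]
  · intro i
    have h1 := hb i
    have h2 := hx₀.2 i
    have h3 := hx.2 i
    simp only [hzdef, Pi.sub_apply] at h1
    simp only [Pi.add_apply, Pi.smul_apply, smul_eq_mul, Nat.cast_one, one_mul]
    omega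
  · have : (∑ i, w i * (((x₀ + (1 : ℤ) • g) i : ℤ) : ℝ)) =
        (∑ i, w i * (x₀ i : ℝ)) + (∑ i, w i * (g i : ℝ)) := by
      rw [← Finset.sum_add_distrib]
      apply Finset.sum_congr rfl
      intro i _
      simp only [Pi.add_apply, Pi.smul_apply, smul_eq_mul, one_mul]
      push_cast
      ring
    push_cast at this ⊢
    rw [this]
    linarith
end

section
/- Every nonzero element z of L*(A) can be written as a finite nonnegative-integer combination z = Σᵢ λᵢ gᵢ of Graver basis elements gᵢ ∈ G(A) with each λᵢ a positive integer and each gᵢ ⊑ z (a conformal sum). -/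
private lemma conf_coord (a b : ℤ) (h1 : 0 ≤ a * b) (h2 : |a| ≤ |b|) :
    0 ≤ (b - a) * b ∧ |b - a| ≤ |b| ∧ (b - a).natAbs + a.natAbs = b.natAbs := by
  rcases lt_trichotomy b 0 with hb | hb | hb
  · have ha : a ≤ 0 := by
      by_contra hc
      push_neg at hc
      nlinarith
    rw [abs_of_nonpos ha, abs_of_nonpos hb.le] at h2
    have hba : b - a ≤ 0 := by linarith
    refine ⟨by nlinarith, ?_, ?_⟩
    · rw [abs_of_nonpos hba, abs_of_nonpos hb.le]; linarith
    · omega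
  · subst hb
    rw [abs_zero] at h2
    have ha : a = 0 := abs_nonpos_iff.mp h2
    simp [ha]
  · have ha : 0 ≤ a := by
      by_contra hc
      push_neg at hc
      nlinarith
    rw [abs_of_nonneg ha, abs_of_nonneg hb.le] at h2
    have hba : 0 ≤ b - a := by linarith
    refine ⟨by nlinarith, ?_, ?_⟩
    · rw [abs_of_nonneg hba, abs_of_nonneg hb.le]; linarith
    · omega

private lemma conf_trans {n : ℕ} {x y z : Fin n → ℤ}
    (hxy : ConformalTo x y) (hyz : ConformalTo y z) : ConformalTo x z := by
  intro i
  obtain ⟨h1, h2⟩ := hxy i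
  obtain ⟨h3, h4⟩ := hyz i
  constructor
  · rcases eq_or_ne (y i) 0 with hy | hy
    · have : x i = 0 := by
        have := h2
        rw [hy, abs_zero] at this
        exact abs_nonpos_iff.mp this
      simp [this]
    · have hy2 : 0 < y i * y i := mul_self_pos.mpr hy
      nlinarith
  · exact h2.trans h4

private lemma sum_natAbs_pos {n : ℕ} {x : Fin n → ℤ} (hx : x ≠ 0) :
    0 < ∑ i, (x i).natAbs := by
  rcases Nat.eq_zero_or_pos (∑ i, (x i).natAbs) with h | h
  · exfalso
    apply hx
    funext i
    have := Finset.sum_eq_zero_iff.mp h i (Finset.mem_univ i)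
    simp only [Pi.zero_apply]
    omega
  · exact h

private lemma main_aux (m n : ℕ) (A : Matrix (Fin m) (Fin n) ℤ) :
    ∀ N : ℕ, ∀ z : Fin n → ℤ, (∑ i, (z i).natAbs) = N → z ∈ kernelLattice A →
    ∃ (k : ℕ) (g : Fin k → (Fin n → ℤ)) (lam : Fin k → ℕ),
      (∀ i, g i ∈ graverBasis A ∧ 0 < lam i ∧ ConformalTo (g i) z) ∧
      z = ∑ i, (lam i : ℤ) • g i := by
  intro N
  induction N using Nat.strong_induction_on with
  | _ N ih =>
    intro z hN hz
    by_cases hmin : ∀ h ∈ kernelLattice A, h ≠ z → ¬ ConformalTo h z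
    · -- z is a Graver element
      refine ⟨1, fun _ => z, fun _ => 1, ?_, ?_⟩
      · intro i
        refine ⟨⟨hz, hmin⟩, one_pos, ?_⟩
        intro j
        exact ⟨mul_self_nonneg _, le_refl _⟩
      · simp
    · push_neg at hmin
      obtain ⟨h, hhK, hhne, hconf⟩ := hmin
      -- z - h is in the kernel lattice, conformal to z, with smaller norm
      have hzh_ne : z - h ≠ 0 := fun hc => hhne (by
        have : z = h := by
          funext i
          have := congrFun hc i
          simp at this
          linarith
        exact this.symm)
      have hzhK : z - h ∈ kernelLattice A := by
        refine ⟨?_, hzh_ne⟩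
        rw [Matrix.mulVec_sub, hz.1, hhK.1, sub_zero]
      have hcoord : ∀ i, 0 ≤ (z i - h i) * z i ∧ |z i - h i| ≤ |z i| ∧
          (z i - h i).natAbs + (h i).natAbs = (z i).natAbs :=
        fun i => conf_coord (h i) (z i) (hconf i).1 (hconf i).2
      have hzhconf : ConformalTo (z - h) z := by
        intro i
        exact ⟨(hcoord i).1, (hcoord i).2.1⟩
      have hsum : (∑ i, (z i - h i).natAbs) + (∑ i, (h i).natAbs) = N := by
        rw [← Finset.sum_add_distrib, ← hN]
        exact Finset.sum_congr rfl (fun i _ => (hcoord i).2.2)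
      have hh_pos : 0 < ∑ i, (h i).natAbs := sum_natAbs_pos hhK.2
      have hzh_pos : 0 < ∑ i, (z i - h i).natAbs := by
        have := sum_natAbs_pos hzh_ne
        simpa using this
      have hlt1 : (∑ i, (h i).natAbs) < N := by omega
      have hlt2 : (∑ i, (z i - h i).natAbs) < N := by omega
      obtain ⟨k1, g1, lam1, hP1, hE1⟩ := ih _ hlt1 h rfl hhK
      obtain ⟨k2, g2, lam2, hP2, hE2⟩ := ih _ hlt2 (z - h) rfl hzhK
      refine ⟨k1 + k2, Fin.append g1 g2, Fin.append lam1 lam2, ?_, ?_⟩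
      · intro i
        refine Fin.addCases (fun j => ?_) (fun j => ?_) i
        · simp only [Fin.append_left]
          exact ⟨(hP1 j).1, (hP1 j).2.1, conf_trans (hP1 j).2.2 hconf⟩
        · simp only [Fin.append_right]
          exact ⟨(hP2 j).1, (hP2 j).2.1, conf_trans (hP2 j).2.2 hzhconf⟩
      · rw [Fin.sum_univ_add]
        simp only [Fin.append_left, Fin.append_right]
        rw [← hE1, ← hE2]
        abel

/-- **Conformal decomposition into Graver elements.** Every `z ∈ L*(A)` is a finite
positive-integer combination `z = Σᵢ λᵢ gᵢ` of Graver basis elements `gᵢ ∈ G(A)` with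
each `gᵢ ⊑ z`. -/
theorem stmt_5 (m n : ℕ) (A : Matrix (Fin m) (Fin n) ℤ)
    (z : Fin n → ℤ) (hz : z ∈ kernelLattice A) :
    ∃ (k : ℕ) (g : Fin k → (Fin n → ℤ)) (lam : Fin k → ℕ),
      (∀ i, g i ∈ graverBasis A ∧ 0 < lam i ∧ ConformalTo (g i) z) ∧
      z = ∑ i, (lam i : ℤ) • g i := by
  exact main_aux m n A _ z rfl hz
end

section
/- Let G = (N, A) be a finite directed graph, E ⊆ N a set of exit nodes, and k ∈ N \ E. Suppose y : A → {0,1} satisfies: (i) for every node i ∈ N \ E, Σ_{j : (i,j) ∈ A} y(i,j) − Σ_{j : (j,i) ∈ A} y(j,i) = 1 if i = k and 0 otherwise; and (ii) every node i ∈ N \ E has at most one outgoing arc with y(i,j) = 1 (i.e., Σ_{j : (i,j) ∈ A} y(i,j) ≤ 1). Then there exists a directed path from k to some node of E using only arcs with y = 1 that visits no node more than once (a simple path); in particular, the added one-outgoing-edge constraint eliminates cyclic paths along the route from k to the exit. -/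
set_option maxHeartbeats 4000000 in
private theorem stmt_8_aux {V : Type*} [Fintype V] [DecidableEq V]
    (Arc : Finset (V × V)) (E : Finset V) (k : V) (hk : k ∉ E)
    (y : V × V → ℕ) (hbin : ∀ a, y a = 0 ∨ y a = 1)
    (hcons : ∀ i, i ∉ E →
      ((∑ j ∈ Finset.univ.filter (fun j => (i, j) ∈ Arc), (y (i, j) : ℤ)) -
       (∑ j ∈ Finset.univ.filter (fun j => (j, i) ∈ Arc), (y (j, i) : ℤ))) =
        (if i = k then 1 else 0))
    (hout : ∀ i, i ∉ E →
      (∑ j ∈ Finset.univ.filter (fun j => (i, j) ∈ Arc), y (i, j)) ≤ 1) :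
    ∃ (len : ℕ) (v : Fin (len + 1) → V),
      Function.Injective v ∧
      v 0 = k ∧ v (Fin.last len) ∈ E ∧
      ∀ i : Fin len, (v i.castSucc, v i.succ) ∈ Arc ∧ y (v i.castSucc, v i.succ) = 1 := by
  classical
  set R : V → V → Prop := fun a b => (a, b) ∈ Arc ∧ y (a, b) = 1 with hRdef
  set Out : V → ℕ := fun i => ∑ j ∈ Finset.univ.filter (fun j => (i, j) ∈ Arc), y (i, j)
    with hOutdef
  set Inf : V → ℕ := fun i => ∑ j ∈ Finset.univ.filter (fun j => (j, i) ∈ Arc), y (j, i)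
    with hInfdef
  have hconsN : ∀ i, i ∉ E → (Out i : ℤ) - (Inf i : ℤ) = (if i = k then 1 else 0) := by
    intro i hi
    have := hcons i hi
    push_cast [hOutdef, hInfdef]
    push_cast at this
    exact this
  have hInk : Inf k = 0 := by
    have h1 := hconsN k hk
    have h2 : Out k ≤ 1 := hout k hk
    rw [if_pos rfl] at h1
    omega
  have hIn_le : ∀ i, i ∉ E → i ≠ k → Inf i ≤ 1 := by
    intro i hi hik
    have h1 := hconsN i hi
    have h2 : Out i ≤ 1 := hout i hi
    rw [if_neg hik] at h1
    omega
  -- inflow lower bounds from explicit arcs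
  have hIn1 : ∀ u w, (u, w) ∈ Arc → y (u, w) = 1 → 1 ≤ Inf w := by
    intro u w ha hy
    have hu : u ∈ Finset.univ.filter (fun j => (j, w) ∈ Arc) := by simp [ha]
    calc 1 = y (u, w) := hy.symm
    _ ≤ Inf w := Finset.single_le_sum (f := fun j => y (j, w)) (fun _ _ => Nat.zero_le _) hu
  have hIn2 : ∀ u₁ u₂ w, u₁ ≠ u₂ → (u₁, w) ∈ Arc → y (u₁, w) = 1 →
      (u₂, w) ∈ Arc → y (u₂, w) = 1 → 2 ≤ Inf w := by
    intro u₁ u₂ w hne ha1 hy1 ha2 hy2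
    have hsub : ({u₁, u₂} : Finset V) ⊆ Finset.univ.filter (fun j => (j, w) ∈ Arc) := by
      intro x hx
      simp only [Finset.mem_insert, Finset.mem_singleton] at hx
      rcases hx with rfl | rfl <;> simp [ha1, ha2]
    calc (2 : ℕ) = y (u₁, w) + y (u₂, w) := by omega
    _ = ∑ j ∈ ({u₁, u₂} : Finset V), y (j, w) :=
        (Finset.sum_pair (f := fun j => y (j, w)) hne).symm
    _ ≤ Inf w := Finset.sum_le_sum_of_subset hsub
  -- existence of a successor
  have hsucc : ∀ i, i ∉ E → (i = k ∨ 1 ≤ Inf i) → ∃ j, R i j := by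
    intro i hi hcase
    have h1 := hconsN i hi
    have hpos : 1 ≤ Out i := by
      rcases hcase with rfl | h
      · rw [if_pos rfl] at h1; omega
      · split_ifs at h1 <;> omega
    have hne0 : Out i ≠ 0 := by omega
    obtain ⟨j, hj, hyj⟩ := Finset.exists_ne_zero_of_sum_ne_zero hne0
    simp only [Finset.mem_filter, Finset.mem_univ, true_and] at hj
    refine ⟨j, hj, ?_⟩
    rcases hbin (i, j) with h | h
    · exact absurd h hyj
    · exact h
  -- one step of path extension
  have step : ∀ (l : List V) (hne : l ≠ []), l.Nodup → l.Chain' R → l.head hne = k →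
      (∀ x ∈ l, x ∉ E) →
      (∃ (m : List V) (hm : m ≠ []), m.Nodup ∧ m.Chain' R ∧ m.head hm = k ∧
        m.getLast hm ∈ E) ∨
      (∃ w, w ∉ l ∧ (l ++ [w]).Nodup ∧ (l ++ [w]).Chain' R ∧
        (l ++ [w]).head (by simp) = k ∧ (∀ x ∈ l ++ [w], x ∉ E)) := by
    intro l hne hnd hch hhd hE
    set v := l.getLast hne with hv
    have hvmem : v ∈ l := List.getLast_mem hne
    have hvE : v ∉ E := hE v hvmem
    have hhd' : l.get ⟨0, by cases l; exact absurd rfl hne; simp⟩ = k := by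
      obtain ⟨a, t, rfl⟩ : ∃ a t, l = a :: t :=
        ⟨l.head hne, l.tail, (List.cons_head_tail hne).symm⟩
      simpa using hhd
    -- v = k or v has an incoming y-arc
    have hvcase : v = k ∨ 1 ≤ Inf v := by
      by_cases hvk : v = k
      · exact Or.inl hvk
      · right
        have hlen2 : 2 ≤ l.length := by
          obtain ⟨a, t, rfl⟩ : ∃ a t, l = a :: t :=
            ⟨l.head hne, l.tail, (List.cons_head_tail hne).symm⟩
          rcases t with _ | ⟨b, t'⟩
          · exact absurd (by simpa [hv] using hhd) hvk
          · simp
        have hvget : v = l.get ⟨l.length - 1, by omega⟩ :=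
          hv.trans (by simp [List.getLast_eq_getElem])
        have hchain := List.isChain_iff_getElem.mp hch
        have hr := hchain (l.length - 2) (by omega)
        have hr' : R (l.get ⟨l.length - 2, by omega⟩) v := by
          rw [hvget]
          convert hr using 3
          · simp
          · simp only [List.get_eq_getElem]; congr 1; omega
        exact hIn1 _ _ hr'.1 hr'.2
    obtain ⟨w, hw⟩ := hsucc v hvE hvcase
    have hchainapp : (l ++ [w]).Chain' R := by
      rw [List.Chain', List.isChain_append]
      refine ⟨hch, List.isChain_singleton w, ?_⟩
      intro x hx z hz
      simp only [List.head?_cons, Option.mem_def, Option.some.injEq] at hz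
      rw [List.getLast?_eq_getLast hne] at hx
      simp only [Option.mem_def, Option.some.injEq] at hx
      subst hx; subst hz
      exact hw
    have hheadapp : (l ++ [w]).head (by simp) = k := by
      rw [List.head_append_of_ne_nil hne]; exact hhd
    by_cases hwE : w ∈ E
    · -- finish with l ++ [w]
      left
      have hwl : w ∉ l := fun hmem => (hE w hmem) hwE
      refine ⟨l ++ [w], by simp, ?_, hchainapp, hheadapp, ?_⟩
      · simp [List.nodup_append, hnd, hwl]; exact fun a ha h => hwl (h ▸ ha)
      · rw [List.getLast_append]; exact hwE
    · -- show w ∉ l, then extend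
      right
      have hwk : w ≠ k := by
        intro hwkeq
        have h1 := hIn1 v w hw.1 hw.2
        rw [hwkeq, hInk] at h1
        omega
      have hwl : w ∉ l := by
        intro hmem
        obtain ⟨⟨j, hj⟩, hget⟩ := List.mem_iff_get.mp hmem
        have hj0 : j ≠ 0 := by
          intro h0
          subst h0
          exact hwk (hget ▸ hhd')
        have hchain := List.isChain_iff_getElem.mp hch
        have hr := hchain (j - 1) (by omega)
        have hr' : R (l.get ⟨j - 1, by omega⟩) w := by
          rw [← hget]
          convert hr using 3
          · simp
          · simp only [List.get_eq_getElem]; congr 1; omega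
        have huv : l.get ⟨j - 1, by omega⟩ ≠ v := by
          intro huveq
          have hvget : v = l.get ⟨l.length - 1, by omega⟩ :=
            hv.trans (by simp [List.getLast_eq_getElem])
          have hinj := List.nodup_iff_injective_get.mp hnd
          have h2 := hinj (huveq.trans hvget)
          have h3 : j - 1 = l.length - 1 := by simpa [Fin.ext_iff] using h2
          omega
        have h2 := hIn2 _ v w huv hr'.1 hr'.2 hw.1 hw.2
        have h3 := hIn_le w hwE hwk
        omega
      refine ⟨w, hwl, ?_, hchainapp, hheadapp, ?_⟩
      · simp [List.nodup_append, hnd, hwl]; exact fun a ha h => hwl (h ▸ ha)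
      · intro x hx
        rcases List.mem_append.mp hx with h | h
        · exact hE x h
        · simp only [List.mem_singleton] at h
          subst h; exact hwE
  -- iterate
  have main : ∀ (n : ℕ) (l : List V) (hne : l ≠ []), l.Nodup → l.Chain' R →
      l.head hne = k → (∀ x ∈ l, x ∉ E) → Fintype.card V ≤ l.length + n →
      ∃ (m : List V) (hm : m ≠ []), m.Nodup ∧ m.Chain' R ∧ m.head hm = k ∧
        m.getLast hm ∈ E := by
    intro n
    induction n with
    | zero =>
      intro l hne hnd hch hhd hE hcard
      rcases step l hne hnd hch hhd hE with h | ⟨w, hwl, hnd', hch', hhd', hE'⟩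
      · exact h
      · exfalso
        have hle := List.Nodup.length_le_card hnd'
        simp only [List.length_append, List.length_singleton] at hle
        omega
    | succ n ih =>
      intro l hne hnd hch hhd hE hcard
      rcases step l hne hnd hch hhd hE with h | ⟨w, hwl, hnd', hch', hhd', hE'⟩
      · exact h
      · refine ih (l ++ [w]) (by simp) hnd' hch' hhd' hE' ?_
        simp only [List.length_append, List.length_singleton]
        omega
  obtain ⟨m, hm, hmnd, hmch, hmhd, hmlast⟩ :=
    main (Fintype.card V) [k] (by simp) (by simp) (List.isChain_singleton k) (by simp)
      (by simp [hk]) (by simp)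
  -- convert list to Fin function
  have hlen : m.length - 1 + 1 = m.length := by
    cases m
    · exact absurd rfl hm
    · simp
  refine ⟨m.length - 1, fun i => m.get (Fin.cast hlen i), ?_, ?_, ?_, ?_⟩
  · intro a b hab
    have hinj := List.nodup_iff_injective_get.mp hmnd
    have h2 := hinj hab
    exact Fin.cast_injective _ h2
  · obtain ⟨a, t, rfl⟩ : ∃ a t, m = a :: t :=
      ⟨m.head hm, m.tail, (List.cons_head_tail hm).symm⟩
    simpa using hmhd
  · have h1 : m.getLast hm = m.get ⟨m.length - 1, by omega⟩ := by simp [List.getLast_eq_getElem]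
    rw [h1] at hmlast
    convert hmlast using 2 <;> rfl
  · intro i
    have hchain := List.isChain_iff_getElem.mp hmch
    have hr := hchain i (by have := i.isLt; omega)
    have h1 : m.get (Fin.cast hlen i.castSucc) = m.get ⟨i, by have := i.isLt; omega⟩ := by
      congr 1
    have h2 : m.get (Fin.cast hlen i.succ) = m.get ⟨(i : ℕ) + 1, by have := i.isLt; omega⟩ := by
      congr 1
    show R (m.get (Fin.cast hlen i.castSucc)) (m.get (Fin.cast hlen i.succ))
    rw [h1, h2]
    exact hr


/-- **Binary flow with at most one outgoing arc yields a simple path to an exit.**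
In a finite directed graph with arcs `Arc`, exits `E`, and `k ∉ E`, if the binary
vector `y : A → {0,1}` satisfies the flow-conservation constraints at each non-exit
node (net outflow `1` at `k`, `0` elsewhere) and every non-exit node has at most one
outgoing arc with `y = 1`, then there is a directed path from `k` to some node of `E`
using only arcs with `y = 1` that visits no node more than once (a simple path). -/
theorem stmt_8 {V : Type*} [Fintype V] [DecidableEq V]
    (Arc : Finset (V × V)) (E : Finset V) (k : V) (hk : k ∉ E)
    (y : V × V → ℕ) (hbin : ∀ a, y a = 0 ∨ y a = 1)
    (hcons : ∀ i, i ∉ E →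
      ((∑ j ∈ Finset.univ.filter (fun j => (i, j) ∈ Arc), (y (i, j) : ℤ)) -
       (∑ j ∈ Finset.univ.filter (fun j => (j, i) ∈ Arc), (y (j, i) : ℤ))) =
        (if i = k then 1 else 0))
    (hout : ∀ i, i ∉ E →
      (∑ j ∈ Finset.univ.filter (fun j => (i, j) ∈ Arc), y (i, j)) ≤ 1) :
    ∃ (len : ℕ) (v : Fin (len + 1) → V),
      Function.Injective v ∧
      v 0 = k ∧ v (Fin.last len) ∈ E ∧
      ∀ i : Fin len, (v i.castSucc, v i.succ) ∈ Arc ∧ y (v i.castSucc, v i.succ) = 1 :=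
  stmt_8_aux Arc E k hk y hbin hcons hout
end
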